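/- arXiv:math/9907085 — 13 statements merged into one kernel-verified Lean document; each statement's English description precedes it below -/
import Mathlib

section
/- Let (B,·) be a left loop and let H ≤ Sym₁(B) be a transassociant of B. Then the set B × H with the binary operation (x,φ)·(y,ψ) = (x·φ(y), L(x,φ(y)) ∘ μ_y(φ) ∘ φ ∘ ψ) is a group: the operation is associative, (1, id) is a two-sided identity, and every element has a two-sided inverse. -/
/-- Let `(B,·)` be a left loop and let `H ≤ Sym₁(B)` be a
transassociant of `B`.  Then the set `B × H` with the binary operation
`(x,φ)·(y,ψ) = (x·φ(y), L(x,φ(y)) * μ_y(φ) * φ * ψ)` is a group: the operation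
is `H`-closed and associative, `(1, id)` is a two-sided identity, and every
element has a two-sided inverse.  (Elements of `B × H` are modelled as pairs
in `B × Equiv.Perm B` whose second component lies in the subgroup `H`.) -/
theorem statement4 {B : Type*} [Mul B] [One B]
    (one_mul' : ∀ x : B, 1 * x = x) (mul_one' : ∀ x : B, x * 1 = x)
    (L : B → Equiv.Perm B) (hL : ∀ x y : B, L x y = x * y)
    (H : Subgroup (Equiv.Perm B))
    (hH1 : ∀ φ ∈ H, φ 1 = 1)
    (hHinn : ∀ x y : B, (L (x * y))⁻¹ * L x * L y ∈ H)
    (hHdev : ∀ (x : B), ∀ φ ∈ H, (L (φ x))⁻¹ * φ * L x * φ⁻¹ ∈ H)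
    (op : B × Equiv.Perm B → B × Equiv.Perm B → B × Equiv.Perm B)
    (hop : ∀ p q : B × Equiv.Perm B, op p q =
      (p.1 * p.2 q.1,
        ((L (p.1 * p.2 q.1))⁻¹ * L p.1 * L (p.2 q.1)) *
          ((L (p.2 q.1))⁻¹ * p.2 * L q.1 * p.2⁻¹) * p.2 * q.2)) :
    (∀ p q : B × Equiv.Perm B, p.2 ∈ H → q.2 ∈ H → (op p q).2 ∈ H) ∧
    (∀ p q r : B × Equiv.Perm B, p.2 ∈ H → q.2 ∈ H → r.2 ∈ H →
      op (op p q) r = op p (op q r)) ∧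
    (∀ p : B × Equiv.Perm B, p.2 ∈ H → op (1, 1) p = p ∧ op p (1, 1) = p) ∧
    (∀ p : B × Equiv.Perm B, p.2 ∈ H →
      ∃ q : B × Equiv.Perm B, q.2 ∈ H ∧ op p q = (1, 1) ∧ op q p = (1, 1)) := by

  have hL1 : L 1 = 1 := by
    ext y; rw [hL, one_mul']; rfl
  have key : ∀ p q : B × Equiv.Perm B,
      L (op p q).1 * (op p q).2 = L p.1 * p.2 * (L q.1 * q.2) := by
    intro p q
    rw [hop]
    group
  have hfst : ∀ p : B × Equiv.Perm B, p.2 ∈ H → (L p.1 * p.2) 1 = p.1 := by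
    intro p hp
    rw [Equiv.Perm.mul_apply, hH1 _ hp, hL, mul_one']
  have inj : ∀ p q : B × Equiv.Perm B, p.2 ∈ H → q.2 ∈ H →
      L p.1 * p.2 = L q.1 * q.2 → p = q := by
    intro p q hp hq h
    have h1 : p.1 = q.1 := by rw [← hfst p hp, ← hfst q hq, h]
    have h2 : p.2 = q.2 := by
      rw [h1] at h
      exact mul_left_cancel h
    exact Prod.ext h1 h2
  have hclosed : ∀ p q : B × Equiv.Perm B, p.2 ∈ H → q.2 ∈ H → (op p q).2 ∈ H := by
    intro p q hp hq
    rw [hop]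
    exact mul_mem (mul_mem (mul_mem (hHinn p.1 (p.2 q.1)) (hHdev q.1 p.2 hp)) hp) hq
  refine ⟨hclosed, ?_, ?_, ?_⟩
  · intro p q r hp hq hr
    apply inj _ _ (hclosed _ _ (hclosed _ _ hp hq) hr) (hclosed _ _ hp (hclosed _ _ hq hr))
    rw [key, key, key, key, mul_assoc]
  · intro p hp
    constructor
    · apply inj _ _ (hclosed _ _ (one_mem H) hp) hp
      rw [key]; simp [hL1]
    · apply inj _ _ (hclosed _ _ hp (one_mem H)) hp
      rw [key]; simp [hL1]
  · rintro ⟨x, φ⟩ hp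
    simp only at hp
    set z : B := φ⁻¹ ((L x).symm 1) with hz
    have hx1 : x * φ z = 1 := by
      rw [← hL, hz, Equiv.Perm.coe_inv, Equiv.apply_symm_apply, Equiv.apply_symm_apply]
    have ha : L x * L (φ z) ∈ H := by
      have h := hHinn x (φ z)
      rwa [hx1, hL1, inv_one, one_mul] at h
    have hc : L x * φ * L z ∈ H := by
      have h := mul_mem (mul_mem ha (hHdev z φ hp)) hp
      convert h using 1
      group
    refine ⟨(z, (L x * φ * L z)⁻¹), inv_mem hc, ?_, ?_⟩
    · apply inj _ _ (hclosed _ _ hp (inv_mem hc)) (one_mem H)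
      rw [key]
      simp only
      rw [hL1]
      group
    · apply inj _ _ (hclosed _ _ (inv_mem hc) hp) (one_mem H)
      rw [key]
      simp only
      rw [hL1]
      group
end

section
/- Let G be a group, H a subgroup of G, and B ⊆ G a unital left transversal of H, with induced operation · on B. Then the following are equivalent: (i) B is also a right transversal of H in G, i.e. every g ∈ G factors uniquely as g = h a with h ∈ H and a ∈ B; (ii) B⁻¹ = {x⁻¹ : x ∈ B} is a left transversal of H in G; (iii) every element of (B,·) has a unique left inverse, i.e. for each x ∈ B there exists a unique y ∈ B with y·x = 1. -/
/-- Let `G` be a group, `H` a subgroup and `B ⊆ G` a unital left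
transversal of `H`, with induced operation `dot` on `B`.  Then the following
are equivalent: (i) `B` is also a right transversal of `H` in `G` (each `g ∈ G`
lies in `Hb` for a unique `b ∈ B`); (ii) `B⁻¹ = {x⁻¹ : x ∈ B}` is a left
transversal of `H` in `G`; (iii) every element of `(B, dot)` has a unique left
inverse. -/
theorem statement6 {G : Type*} [Group G] (H : Subgroup G) (B : Set G)
    (h1B : (1 : G) ∈ B)
    (htrans : ∀ g : G, ∃! b : G, b ∈ B ∧ b⁻¹ * g ∈ H)
    (dot : G → G → G)
    (hdotB : ∀ x ∈ B, ∀ y ∈ B, dot x y ∈ B)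
    (hdotH : ∀ x ∈ B, ∀ y ∈ B, (dot x y)⁻¹ * (x * y) ∈ H) :
    ((∀ g : G, ∃! b : G, b ∈ B ∧ g * b⁻¹ ∈ H) ↔
      (∀ g : G, ∃! b : G, b ∈ (fun x : G => x⁻¹) '' B ∧ b⁻¹ * g ∈ H)) ∧
    ((∀ g : G, ∃! b : G, b ∈ (fun x : G => x⁻¹) '' B ∧ b⁻¹ * g ∈ H) ↔
      (∀ x ∈ B, ∃! y : G, y ∈ B ∧ dot y x = 1)) := by
  have key : ∀ y ∈ B, ∀ x ∈ B, (dot y x = 1 ↔ y * x ∈ H) := by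
    intro y hy x hx
    constructor
    · intro h
      have := hdotH y hy x hx
      rwa [h, inv_one, one_mul] at this
    · intro h
      obtain ⟨b, hb, hub⟩ := htrans (y * x)
      have h1 : dot y x = b := hub _ ⟨hdotB y hy x hx, hdotH y hy x hx⟩
      have h2 : (1 : G) = b := hub 1 ⟨h1B, by rwa [inv_one, one_mul]⟩
      rw [h1, ← h2]
  constructor
  · constructor
    · intro hi g
      obtain ⟨b, ⟨hbB, hbH⟩, hub⟩ := hi g⁻¹
      refine ⟨b⁻¹, ⟨⟨b, hbB, rfl⟩, ?_⟩, ?_⟩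
      · have := H.inv_mem hbH
        rw [inv_inv]
        rwa [mul_inv_rev, inv_inv, inv_inv] at this
      · rintro c ⟨⟨x, hxB, rfl⟩, hcH⟩
        have hxg : x * g ∈ H := by rwa [inv_inv] at hcH
        have : g⁻¹ * x⁻¹ ∈ H := by
          have := H.inv_mem hxg
          rwa [mul_inv_rev] at this
        rw [hub x ⟨hxB, this⟩]
    · intro hii g
      obtain ⟨b, ⟨⟨x, hxB, rfl⟩, hbH⟩, hub⟩ := hii g⁻¹
      have hxg : x * g⁻¹ ∈ H := by rwa [inv_inv] at hbH
      refine ⟨x, ⟨hxB, ?_⟩, ?_⟩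
      · have := H.inv_mem hxg
        rwa [mul_inv_rev, inv_inv] at this
      · rintro c ⟨hcB, hcH⟩
        have : c * g⁻¹ ∈ H := by
          have := H.inv_mem hcH
          rwa [mul_inv_rev, inv_inv] at this
        have h1 : c⁻¹ = x⁻¹ := hub c⁻¹ ⟨⟨c, hcB, rfl⟩, by rwa [inv_inv]⟩
        exact inv_injective h1
  · constructor
    · intro hii x hx
      obtain ⟨b, ⟨⟨y, hyB, rfl⟩, hbH⟩, hub⟩ := hii x
      have hyx : y * x ∈ H := by rwa [inv_inv] at hbH
      refine ⟨y, ⟨hyB, (key y hyB x hx).2 hyx⟩, ?_⟩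
      rintro z ⟨hzB, hz1⟩
      have hzx : z * x ∈ H := (key z hzB x hx).1 hz1
      have h1 : z⁻¹ = y⁻¹ := hub z⁻¹ ⟨⟨z, hzB, rfl⟩, by rwa [inv_inv]⟩
      exact inv_injective h1
    · intro hiii g
      obtain ⟨b, ⟨hbB, hbH⟩, _⟩ := htrans g
      obtain ⟨y, ⟨hyB, hy1⟩, huy⟩ := hiii b hbB
      have hyb : y * b ∈ H := (key y hyB b hbB).1 hy1
      refine ⟨y⁻¹, ⟨⟨y, hyB, rfl⟩, ?_⟩, ?_⟩
      · rw [inv_inv]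
        have : (y * b) * (b⁻¹ * g) ∈ H := H.mul_mem hyb hbH
        rwa [show (y * b) * (b⁻¹ * g) = y * g by group] at this
      · rintro c ⟨⟨z, hzB, rfl⟩, hcH⟩
        have hzg : z * g ∈ H := by rwa [inv_inv] at hcH
        have hzb : z * b ∈ H := by
          have : (z * g) * (b⁻¹ * g)⁻¹ ∈ H := H.mul_mem hzg (H.inv_mem hbH)
          rwa [show (z * g) * (b⁻¹ * g)⁻¹ = z * b by group] at this
        have : z = y := huy z ⟨hzB, (key z hzB b hbB).2 hzb⟩
        rw [this]
end

section
/- Let G be a group, H a subgroup of G, and B ⊆ G a unital left transversal of H, with induced operation · on B, action σ, and mapping m. Then for all x ∈ B and h ∈ H: m(x,1) = 1, m(1,h) = 1, and σ_{m(x,h)} = μ_x(σ_h), where μ_x(σ_h) = L_{σ_h(x)}⁻¹ ∘ σ_h ∘ L_x ∘ σ_h⁻¹ is the deviation of σ_h at x. -/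
/-- Let `G` be a group, `H` a subgroup and `B ⊆ G` a unital left
transversal of `H`, with induced operation `dot`, action `σ`, and the mapping
`m(x,h) = (σ h x)⁻¹ * h * x * h⁻¹ ∈ H`.  Then for all `x ∈ B` and `h ∈ H`:
`m(x,1) = 1`, `m(1,h) = 1`, and `σ (m(x,h)) = μ_x(σ h)`, the deviation
`L (σ h x)⁻¹ ∘ σ h ∘ L x ∘ (σ h)⁻¹` of `σ h` at `x` (expressed equivalently by
applying `L (σ h x)` to both sides and using `(σ h)⁻¹ = σ h⁻¹`). -/
theorem statement9 {G : Type*} [Group G] (H : Subgroup G) (B : Set G)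
    (h1B : (1 : G) ∈ B)
    (htrans : ∀ g : G, ∃! b : G, b ∈ B ∧ b⁻¹ * g ∈ H)
    (dot : G → G → G)
    (hdotB : ∀ x ∈ B, ∀ y ∈ B, dot x y ∈ B)
    (hdotH : ∀ x ∈ B, ∀ y ∈ B, (dot x y)⁻¹ * (x * y) ∈ H)
    (σ : G → G → G)
    (hσB : ∀ g : G, ∀ x ∈ B, σ g x ∈ B)
    (hσH : ∀ g : G, ∀ x ∈ B, (σ g x)⁻¹ * (g * x) ∈ H) :
    ∀ x ∈ B, ∀ h ∈ H,
      ((σ (1 : G) x)⁻¹ * 1 * x * (1 : G)⁻¹ = 1) ∧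
      ((σ h 1)⁻¹ * h * 1 * h⁻¹ = 1) ∧
      (∀ y ∈ B,
        dot (σ h x) (σ ((σ h x)⁻¹ * h * x * h⁻¹) y) = σ h (dot x (σ h⁻¹ y))) := by
  -- uniqueness lemma
  have uniq : ∀ g a b : G, a ∈ B → a⁻¹ * g ∈ H → b ∈ B → b⁻¹ * g ∈ H → a = b := by
    intro g a b haB haH hbB hbH
    obtain ⟨c, _, hu⟩ := htrans g
    exact (hu a ⟨haB, haH⟩).trans (hu b ⟨hbB, hbH⟩).symm
  intro x hx h hh
  refine ⟨?_, ?_, ?_⟩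
  · have : σ (1 : G) x = x := by
      refine uniq x _ _ (hσB 1 x hx) ?_ hx (by simpa using H.one_mem)
      simpa using hσH 1 x hx
    simp [this]
  · have : σ h 1 = 1 := by
      refine uniq (h * 1) _ _ (hσB h 1 h1B) (hσH h 1 h1B) h1B (by simpa using hh)
    simp [this]
  · intro y hy
    set a := σ h x with ha
    have haB : a ∈ B := hσB h x hx
    set m := a⁻¹ * h * x * h⁻¹ with hm
    set b := σ m y with hb
    have hbB : b ∈ B := hσB m y hy
    set d := σ h⁻¹ y with hd
    have hdB : d ∈ B := hσB h⁻¹ y hy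
    set c := dot x d with hc
    have hcB : c ∈ B := hdotB x hx d hdB
    refine uniq (h * x * h⁻¹ * y) _ _ (hdotB a haB b hbB) ?_ (hσB h c hcB) ?_
    · have h1 : (dot a b)⁻¹ * (a * b) ∈ H := hdotH a haB b hbB
      have h2 : b⁻¹ * (m * y) ∈ H := hσH m y hy
      have := H.mul_mem h1 h2
      have heq : (dot a b)⁻¹ * (a * b) * (b⁻¹ * (m * y)) =
          (dot a b)⁻¹ * (h * x * h⁻¹ * y) := by
        simp [hm]; group
      rwa [heq] at this
    · have h1 : (σ h c)⁻¹ * (h * c) ∈ H := hσH h c hcB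
      have h2 : c⁻¹ * (x * d) ∈ H := hdotH x hx d hdB
      have h3 : d⁻¹ * (h⁻¹ * y) ∈ H := hσH h⁻¹ y hy
      have := H.mul_mem (H.mul_mem h1 h2) h3
      have heq : (σ h c)⁻¹ * (h * c) * (c⁻¹ * (x * d)) * (d⁻¹ * (h⁻¹ * y)) =
          (σ h c)⁻¹ * (h * x * h⁻¹ * y) := by group
      rwa [heq] at this
end

section
/- Let G be a group in which the squaring map g ↦ g² is injective, H a subgroup of G, and B ⊆ G a unital left transversal of H, with induced operation · on B. If the map τ : G → G defined by τ(ah) = a⁻¹h (a ∈ B, h ∈ H) is a semi-automorphism, i.e. τ(g₁g₂g₁) = τ(g₁)τ(g₂)τ(g₁) for all g₁,g₂ ∈ G, then (B,·) is a Bol loop, i.e. L_x ∘ L_y ∘ L_x = L_{x·(y·x)} for all x,y ∈ B. -/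
/-- Let `G` be a group in which squaring `g ↦ g*g` is
injective, `H` a subgroup, and `B ⊆ G` a unital left transversal of `H` with
induced operation `dot`.  If the map `τ : G → G` defined on the unique
factorization by `τ (a*h) = a⁻¹*h` (`a ∈ B`, `h ∈ H`) is a semi-automorphism,
i.e. `τ (g₁*g₂*g₁) = τ g₁ * τ g₂ * τ g₁` for all `g₁, g₂ ∈ G`, then `(B, dot)`
is a Bol loop: `L x ∘ L y ∘ L x = L (x·(y·x))` pointwise on `B`. -/
theorem statement10 {G : Type*} [Group G] (H : Subgroup G) (B : Set G)
    (h1B : (1 : G) ∈ B)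
    (htrans : ∀ g : G, ∃! b : G, b ∈ B ∧ b⁻¹ * g ∈ H)
    (dot : G → G → G)
    (hdotB : ∀ x ∈ B, ∀ y ∈ B, dot x y ∈ B)
    (hdotH : ∀ x ∈ B, ∀ y ∈ B, (dot x y)⁻¹ * (x * y) ∈ H)
    (hsq : Function.Injective (fun g : G => g * g))
    (τ : G → G)
    (hτ : ∀ a ∈ B, ∀ h ∈ H, τ (a * h) = a⁻¹ * h)
    (hsemi : ∀ g₁ g₂ : G, τ (g₁ * g₂ * g₁) = τ g₁ * τ g₂ * τ g₁) :
    ∀ x ∈ B, ∀ y ∈ B, ∀ z ∈ B,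
      dot x (dot y (dot x z)) = dot (dot x (dot y x)) z := by
  -- uniqueness helper
  have uniq : ∀ g : G, ∀ b₁ ∈ B, ∀ b₂ ∈ B,
      b₁⁻¹ * g ∈ H → b₂⁻¹ * g ∈ H → b₁ = b₂ := by
    intro g b₁ h₁ b₂ h₂ m₁ m₂
    obtain ⟨b, -, hb⟩ := htrans g
    rw [hb b₁ ⟨h₁, m₁⟩, hb b₂ ⟨h₂, m₂⟩]
  have τB : ∀ b ∈ B, τ b = b⁻¹ := by
    intro b hb
    have := hτ b hb 1 H.one_mem
    simpa using this
  -- key: x*y*x ∈ B for x, y ∈ B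
  have key : ∀ x ∈ B, ∀ y ∈ B, x * y * x ∈ B := by
    intro x hx y hy
    obtain ⟨w, ⟨hwB, hwH⟩, -⟩ := htrans (x * y * x)
    have hfac : x * y * x = w * (w⁻¹ * (x * y * x)) := by group
    have h1 : τ (x * y * x) = w⁻¹ * (w⁻¹ * (x * y * x)) := by
      have h0 := hτ w hwB _ hwH
      rwa [← hfac] at h0
    have h2 : τ (x * y * x) = x⁻¹ * y⁻¹ * x⁻¹ := by
      rw [hsemi x y, τB x hx, τB y hy]
    have h3 : w⁻¹ * (w⁻¹ * (x * y * x)) = x⁻¹ * y⁻¹ * x⁻¹ := by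
      rw [← h1, h2]
    have h4 : (x * y * x) * (x * y * x) = w * w := by
      have := congrArg (fun t => w * (w * (t * (x * y * x)))) h3
      simpa [mul_assoc] using this
    have := hsq h4
    simpa [← this] using hwB
  intro x hx y hy z hz
  -- LHS lies over the coset (x*y*x*z)H
  set v := dot x z with hv
  have hvB := hdotB x hx z hz
  have hvH := hdotH x hx z hz
  set u := dot y v with hu
  have huB := hdotB y hy v hvB
  have huH := hdotH y hy v hvB
  have hLB := hdotB x hx u huB
  have hLH := hdotH x hx u huB
  have hLcoset : (dot x u)⁻¹ * (x * y * x * z) ∈ H := by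
    have h5 : u⁻¹ * (y * x * z) ∈ H := by
      have := H.mul_mem huH hvH
      simpa [mul_assoc, hv, hu] using this
    have := H.mul_mem hLH h5
    simpa [mul_assoc] using this
  -- identify dot x (dot y x) with x*y*x
  set w₀ := dot y x with hw₀
  have hw₀B := hdotB y hy x hx
  have hw₀H := hdotH y hy x hx
  have hxyxB := key x hx y hy
  have hR1 : dot x w₀ = x * y * x := by
    refine uniq (x * w₀) _ (hdotB x hx w₀ hw₀B) _ hxyxB (hdotH x hx w₀ hw₀B) ?_
    have : (x * y * x)⁻¹ * (x * w₀) = (w₀⁻¹ * (y * x))⁻¹ := by group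
    rw [this]
    exact H.inv_mem hw₀H
  have hRB := hdotB (x * y * x) hxyxB z hz
  have hRH := hdotH (x * y * x) hxyxB z hz
  rw [hR1]
  exact uniq (x * y * x * z) _ hLB _ hRB hLcoset hRH
end

section
/- Let G be a group, H a subgroup of G, and B ⊆ G a unital left transversal of H, with induced operation · on B. Then the homomorphism σ : G → Sym(B), g ↦ σ_g, is injective with image equal to LMlt(B,·) (so σ is an isomorphism from G onto LMlt(B,·)) if and only if the normal core of H in G is trivial and G is generated by B. -/
/-- Let `G` be a group, `H` a subgroup and `B ⊆ G` a unital
left transversal of `H`.  Let `σ : G → Sym(B)` be the action homomorphism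
(`σ g x` is the unique element of `B` with `(σ g x)H = gxH`), and let
`L : B → Sym(B)` be the left translations of the induced loop operation
(`L x y` is the unique element of `B` with `(L x y)H = xyH`).  Then `σ` is
injective with image equal to `LMlt(B,·) = ⟨L x : x ∈ B⟩` (i.e. `σ` is an
isomorphism of `G` onto `LMlt(B,·)`) if and only if the normal core of `H` in
`G` is trivial and `G` is generated by `B`. -/
theorem statement11 {G : Type*} [Group G] (H : Subgroup G) (B : Set G)
    (h1B : (1 : G) ∈ B)
    (htrans : ∀ g : G, ∃! b : G, b ∈ B ∧ b⁻¹ * g ∈ H)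
    (σ : G → Equiv.Perm B)
    (hσhom : ∀ g g' : G, σ (g * g') = σ g * σ g')
    (hσH : ∀ (g : G) (x : B), (σ g x : G)⁻¹ * (g * (x : G)) ∈ H)
    (L : B → Equiv.Perm B)
    (hLH : ∀ x y : B, (L x y : G)⁻¹ * ((x : G) * (y : G)) ∈ H) :
    (Function.Injective σ ∧
        Set.range σ = (Subgroup.closure (Set.range L) : Subgroup (Equiv.Perm B))) ↔
      (H.normalCore = ⊥ ∧ Subgroup.closure B = ⊤) := by
  classical
  -- uniqueness helper
  have huniq : ∀ (g : G) (b b' : B), (b : G)⁻¹ * g ∈ H → (b' : G)⁻¹ * g ∈ H → b = b' := by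
    intro g b b' hb hb'
    obtain ⟨c, -, hc⟩ := htrans g
    have h1 := hc b ⟨b.2, hb⟩
    have h2 := hc b' ⟨b'.2, hb'⟩
    exact Subtype.ext (h1.trans h2.symm)
  have hσ1 : σ 1 = 1 := by
    have h := hσhom 1 1
    rw [mul_one] at h
    exact (left_eq_mul.mp h)
  let σ' : G →* Equiv.Perm B := { toFun := σ, map_one' := hσ1, map_mul' := hσhom }
  -- L x = σ x
  have hLσ : ∀ x : B, L x = σ (x : G) := by
    intro x
    apply Equiv.ext; intro y
    exact (huniq ((x : G) * (y : G)) (L x y) (σ (x : G) y) (hLH x y) (hσH (x : G) y))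
  have hrangeL : Set.range L = σ '' B := by
    ext p
    constructor
    · rintro ⟨x, rfl⟩
      exact ⟨(x : G), x.2, (hLσ x).symm⟩
    · rintro ⟨g, hg, rfl⟩
      exact ⟨⟨g, hg⟩, by rw [hLσ]⟩
  -- kernel of σ' is the normal core
  have hker : σ'.ker = H.normalCore := by
    ext g
    rw [MonoidHom.mem_ker]
    constructor
    · intro hg
      intro k
      obtain ⟨b, ⟨hbB, hbk⟩, -⟩ := htrans k⁻¹
      have hg' : σ g = 1 := hg
      have hfix : (⟨b, hbB⟩ : B) = σ g ⟨b, hbB⟩ := by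
        rw [hg']; rfl
      have hb : b⁻¹ * (g * b) ∈ H := by
        have := hσH g ⟨b, hbB⟩
        rw [← hfix] at this
        exact this
      have heq : k * g * k⁻¹ = (k * b) * (b⁻¹ * (g * b)) * (b⁻¹ * k⁻¹) := by group
      rw [heq]
      exact H.mul_mem (H.mul_mem (by simpa using H.inv_mem hbk) hb) hbk
    · intro hg
      have : ∀ x : B, σ g x = x := by
        intro x
        have hx : (x : G)⁻¹ * (g * (x : G)) ∈ H := by
          have := (show g ∈ H.normalCore from hg) (x : G)⁻¹
          simpa [mul_assoc] using this
        exact huniq (g * (x : G)) (σ g x) x (hσH g x) hx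
      exact Equiv.ext this
  have hinj_iff : Function.Injective σ ↔ H.normalCore = ⊥ := by
    rw [← hker]
    exact ⟨fun h => σ'.ker_eq_bot_iff.mpr h, fun h => σ'.ker_eq_bot_iff.mp h⟩
  constructor
  · rintro ⟨hinj, hrange⟩
    refine ⟨hinj_iff.mp hinj, ?_⟩
    have hmap : (Subgroup.closure B).map σ' = σ'.range := by
      apply SetLike.coe_injective
      rw [MonoidHom.map_closure]
      have : Subgroup.closure (σ' '' B) = Subgroup.closure (Set.range L) := by
        rw [hrangeL]; rfl
      rw [this, ← hrange]
      rfl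
    have := Subgroup.map_injective (f := σ') hinj
    apply this
    rw [hmap, MonoidHom.range_eq_map]
  · rintro ⟨hcore, hclos⟩
    have hinj : Function.Injective σ := hinj_iff.mpr hcore
    refine ⟨hinj, ?_⟩
    have hmap : (Subgroup.closure B).map σ' = σ'.range := by
      rw [hclos, ← MonoidHom.range_eq_map]
    calc Set.range σ = (σ'.range : Set (Equiv.Perm B)) := rfl
      _ = ((Subgroup.closure B).map σ' : Set (Equiv.Perm B)) := by rw [hmap]
      _ = (Subgroup.closure (σ' '' B) : Set (Equiv.Perm B)) := by rw [MonoidHom.map_closure]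
      _ = (Subgroup.closure (Set.range L) : Set (Equiv.Perm B)) := by rw [hrangeL]; rfl
end

section
/- Let (B,·) be a left loop satisfying L_x ∘ L_y ∘ L_y ∘ L_x = L_{x·y} ∘ L_{x·y} for all x,y ∈ B. Then (B,·) has the left inverse property (L_x⁻¹ = L_{x^ρ} for all x ∈ B) if and only if (B,·) has the automorphic inverse property ((x·y)^ρ = x^ρ·y^ρ for all x,y ∈ B). -/
/-- Let `(B,·)` be a left loop satisfying
`L x * L y * L y * L x = L (x*y) * L (x*y)` for all `x, y ∈ B`.
Then `(B,·)` has the left inverse property (`(L x)⁻¹ = L (x^ρ)`, where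
`x^ρ = (L x)⁻¹ 1` is the right inverse of `x`) if and only if it has the
automorphic inverse property (`(x·y)^ρ = x^ρ · y^ρ` for all `x, y ∈ B`). -/
theorem statement12 {B : Type*} [Mul B] [One B]
    (one_mul' : ∀ x : B, 1 * x = x) (mul_one' : ∀ x : B, x * 1 = x)
    (L : B → Equiv.Perm B) (hL : ∀ x y : B, L x y = x * y)
    (hbr : ∀ x y : B, L x * L y * L y * L x = L (x * y) * L (x * y)) :
    (∀ x : B, (L x)⁻¹ = L ((L x)⁻¹ 1)) ↔
    (∀ x y : B, (L (x * y))⁻¹ 1 = ((L x)⁻¹ 1) * ((L y)⁻¹ 1)) := by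
  -- `L z 1 = z`
  have hone : ∀ z : B, L z 1 = z := fun z => by rw [hL, mul_one']
  -- `(L z)⁻¹ z = 1`
  have hinvself : ∀ z : B, (L z)⁻¹ z = 1 := fun z => by
    have := (show (L z)⁻¹ (L z 1) = 1 from Equiv.symm_apply_apply (L z) 1)
    rwa [hone z] at this
  -- Key lemma (from Bruck identity alone): `ρ(x*y) = (L x)⁻¹ (ρ y)`
  have key : ∀ x y : B, (L (x * y))⁻¹ 1 = (L x)⁻¹ ((L y)⁻¹ 1) := by
    intro x y
    have h2 : ((L x * L y * L y * L x)⁻¹ : Equiv.Perm B) (x * y)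
        = ((L (x * y) * L (x * y))⁻¹ : Equiv.Perm B) (x * y) := by rw [hbr x y]
    simp only [mul_inv_rev, Equiv.Perm.mul_apply] at h2
    have e1 : (L x)⁻¹ (x * y) = y := by
      rw [← hL x y]; exact Equiv.symm_apply_apply (L x) y
    rw [hinvself (x * y), e1, hinvself y] at h2
    exact h2.symm
  -- `ρ (ρ x) = x`
  have hσσ : ∀ x : B, (L ((L x)⁻¹ 1))⁻¹ 1 = x := by
    intro x
    have h1 : x * ((L x)⁻¹ 1) = 1 := by
      rw [← hL]; exact Equiv.apply_symm_apply (L x) 1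
    have h2 := key x ((L x)⁻¹ 1)
    rw [h1, hinvself 1] at h2
    have := congrArg (L x) h2
    rw [hone x, (show ∀ w, L x ((L x)⁻¹ w) = w from Equiv.apply_symm_apply (L x))] at this
    exact this.symm
  constructor
  · intro hlip x y
    rw [key x y, hlip x, hL, hone]
  · intro haip x
    ext z
    have hz : z = (L ((L z)⁻¹ 1))⁻¹ 1 := (hσσ z).symm
    calc (L x)⁻¹ z = (L x)⁻¹ ((L ((L z)⁻¹ 1))⁻¹ 1) := by rw [← hz]
      _ = (L (x * ((L z)⁻¹ 1)))⁻¹ 1 := (key x _).symm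
      _ = ((L x)⁻¹ 1) * ((L ((L z)⁻¹ 1))⁻¹ 1) := haip x _
      _ = ((L x)⁻¹ 1) * z := by rw [← hz]
      _ = L ((L x)⁻¹ 1) z := (hL _ _).symm
end

section
/- Let (B,·) be a left loop satisfying the left alternative property (L_x ∘ L_x = L_{x·x} for all x ∈ B) and the identity x·(y·(y·x)) = (x·y)·(x·y) for all x,y ∈ B. Then (B,·) satisfies L_x ∘ L_y ∘ L_y ∘ L_x = L_{x·y} ∘ L_{x·y} for all x,y ∈ B if and only if it satisfies L_x ∘ L_{y·y} ∘ L_x = L_{x·((y·y)·x)} for all x,y ∈ B. -/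
/-- Let `(B,·)` be a left loop satisfying the left
alternative property (`L x * L x = L (x*x)`) and the identity
`x·(y·(y·x)) = (x·y)·(x·y)` for all `x, y ∈ B`.  Then
`L x * L y * L y * L x = L (x*y) * L (x*y)` holds for all `x, y ∈ B`
if and only if `L x * L (y*y) * L x = L (x·((y·y)·x))` holds for all `x, y ∈ B`. -/
theorem statement13 {B : Type*} [Mul B] [One B]
    (one_mul' : ∀ x : B, 1 * x = x) (mul_one' : ∀ x : B, x * 1 = x)
    (L : B → Equiv.Perm B) (hL : ∀ x y : B, L x y = x * y)
    (hLAP : ∀ x : B, L x * L x = L (x * x))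
    (hbr2 : ∀ x y : B, x * (y * (y * x)) = (x * y) * (x * y)) :
    (∀ x y : B, L x * L y * L y * L x = L (x * y) * L (x * y)) ↔
    (∀ x y : B, L x * L (y * y) * L x = L (x * ((y * y) * x))) := by
  have hsq : ∀ y x : B, y * (y * x) = (y * y) * x := by
    intro y x
    have h := congr_arg (fun f : Equiv.Perm B => f x) (hLAP y)
    simpa [Equiv.Perm.mul_apply, hL] using h
  constructor
  · intro h x y
    calc L x * L (y * y) * L x = L x * (L y * L y) * L x := by rw [hLAP]
      _ = L x * L y * L y * L x := by group
      _ = L (x * y) * L (x * y) := h x y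
      _ = L ((x * y) * (x * y)) := hLAP _
      _ = L (x * (y * (y * x))) := by rw [hbr2]
      _ = L (x * ((y * y) * x)) := by rw [hsq]
  · intro h x y
    calc L x * L y * L y * L x = L x * (L y * L y) * L x := by group
      _ = L x * L (y * y) * L x := by rw [hLAP]
      _ = L (x * ((y * y) * x)) := h x y
      _ = L (x * (y * (y * x))) := by rw [hsq]
      _ = L ((x * y) * (x * y)) := by rw [hbr2]
      _ = L (x * y) * L (x * y) := (hLAP _).symm
end

section
/- Let (B,·) be a Bol loop, i.e. a left loop satisfying L_x ∘ L_y ∘ L_x = L_{x·(y·x)} for all x,y ∈ B. Then (B,·) has the automorphic inverse property ((x·y)^ρ = x^ρ·y^ρ for all x,y ∈ B) if and only if it satisfies L_x ∘ L_y ∘ L_y ∘ L_x = L_{x·y} ∘ L_{x·y} for all x,y ∈ B. -/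
/-- Let `(B,·)` be a (left) Bol loop, i.e. a left loop
satisfying `L x * L y * L x = L (x·(y·x))` for all `x, y ∈ B`.  Then `(B,·)`
has the automorphic inverse property (`(x·y)^ρ = x^ρ · y^ρ`, where
`x^ρ = (L x)⁻¹ 1`) if and only if it satisfies
`L x * L y * L y * L x = L (x·y) * L (x·y)` for all `x, y ∈ B`. -/
theorem statement14 {B : Type*} [Mul B] [One B]
    (one_mul' : ∀ x : B, 1 * x = x) (mul_one' : ∀ x : B, x * 1 = x)
    (L : B → Equiv.Perm B) (hL : ∀ x y : B, L x y = x * y)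
    (hBol : ∀ x y : B, L x * L y * L x = L (x * (y * x))) :
    (∀ x y : B, (L (x * y))⁻¹ 1 = ((L x)⁻¹ 1) * ((L y)⁻¹ 1)) ↔
    (∀ x y : B, L x * L y * L y * L x = L (x * y) * L (x * y)) := by
  -- notation: ρ a = (L a)⁻¹ 1
  have hmulρ : ∀ a : B, a * ((L a)⁻¹ 1) = 1 := fun a => by
    rw [← hL]; exact Equiv.apply_symm_apply (L a) 1
  have hinv : ∀ a : B, L ((L a)⁻¹ 1) = (L a)⁻¹ := by
    intro a
    have h := hBol ((L a)⁻¹ 1) a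
    rw [hmulρ a, mul_one'] at h
    exact eq_inv_of_mul_eq_one_left (mul_eq_right.mp h)
  have hL1 : L (1 : B) = 1 := Equiv.ext fun z => by
    rw [hL, one_mul']; rfl
  have hρρ : ∀ a : B, (L ((L a)⁻¹ 1))⁻¹ 1 = a := by
    intro a
    rw [hinv a, inv_inv, hL, mul_one']
  have hsq : ∀ y : B, L y * L y = L (y * y) := by
    intro y
    have h := hBol y 1
    rwa [hL1, mul_one, one_mul'] at h
  constructor
  · -- AIP → identity
    intro h x y
    have hax := hL ((L x)⁻¹ 1) ((L y)⁻¹ 1)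
    rw [hinv x] at hax
    set a : B := ((L x)⁻¹ 1) * ((L y)⁻¹ 1) with ha
    have hρa : (L a)⁻¹ 1 = x * y := by
      rw [h ((L x)⁻¹ 1) ((L y)⁻¹ 1), hρρ, hρρ]
    have hm : L x * L y * L y * L x = L (x * ((y * y) * x)) := by
      rw [show L x * L y * L y = L x * (L y * L y) from by rw [mul_assoc],
        hsq y, hBol x (y * y)]
    set m : B := x * ((y * y) * x) with hmdef
    have hma : m * a = x * y := by
      rw [← hL, ← hm]
      simp only [Equiv.Perm.mul_apply]
      rw [← hax, (by intro f z; exact Equiv.apply_symm_apply f z : ∀ (f : Equiv.Perm B) z, f (f⁻¹ z) = z), (by intro f z; exact Equiv.apply_symm_apply f z : ∀ (f : Equiv.Perm B) z, f (f⁻¹ z) = z),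
        hL y 1, mul_one', hL x]
    have hBa := hBol a m
    rw [hma, ← hρa, hmulρ a, hL1] at hBa
    have h3 : L (x * y) = (L a)⁻¹ := hρa ▸ hinv a
    rw [hm, h3]
    calc L m = (L a)⁻¹ * (L a * L m * L a) * (L a)⁻¹ := by group
      _ = (L a)⁻¹ * 1 * (L a)⁻¹ := by rw [hBa]
      _ = (L a)⁻¹ * (L a)⁻¹ := by group
  · -- identity → AIP
    intro h x y
    have hax := hL ((L x)⁻¹ 1) ((L y)⁻¹ 1)
    rw [hinv x] at hax
    have key := congrArg (fun σ : Equiv.Perm B => σ ((L x)⁻¹ ((L y)⁻¹ 1))) (h x y)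
    simp only [Equiv.Perm.mul_apply] at key; rw [(by intro f z; exact Equiv.apply_symm_apply f z : ∀ (f : Equiv.Perm B) z, f (f⁻¹ z) = z), (by intro f z; exact Equiv.apply_symm_apply f z : ∀ (f : Equiv.Perm B) z, f (f⁻¹ z) = z)] at key
    rw [hL y 1, mul_one', hL x] at key
    -- key : x * y = L (x*y) (L (x*y) ((L x)⁻¹ ((L y)⁻¹ 1)))
    have h1 : L (x * y) ((L x)⁻¹ ((L y)⁻¹ 1)) = 1 := by
      apply (L (x * y)).injective
      rw [← key, hL, mul_one']
    rw [← hax, Equiv.Perm.inv_eq_iff_eq]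
    exact h1.symm
end

section
/- Let G be a group, H a subgroup of G, and B ⊆ G a unital left transversal of H, with induced operation · on B, and let N = core_G(H) be the normal core of H in G, with BN = {bn : b ∈ B, n ∈ N}. Then the following are equivalent: (i) xBx ⊆ BN for all x ∈ B, i.e. xyx ∈ BN for all x,y ∈ B; (ii) in the quotient group G/N, (xN)(yN)(xN) ∈ {bN : b ∈ B} for all x,y ∈ B; (iii) (B,·) is a Bol loop, i.e. L_x ∘ L_y ∘ L_x = L_{x·(y·x)} for all x,y ∈ B. -/
/-- Let `G` be a group, `H` a subgroup and `B ⊆ G` a unital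
left transversal of `H`, with induced operation `dot` on `B`, and let
`N = core_G(H)` be the normal core of `H` in `G`.  Then the following are
equivalent: (i) `xBx ⊆ BN` for all `x ∈ B`; (ii) in the quotient group `G/N`,
`(xN)(yN)(xN) ∈ {bN : b ∈ B}` for all `x, y ∈ B`; (iii) `(B, dot)` is a Bol
loop, i.e. `L x ∘ L y ∘ L x = L (x·(y·x))` pointwise on `B`. -/
theorem statement15 {G : Type*} [Group G] (H : Subgroup G) (B : Set G)
    (h1B : (1 : G) ∈ B)
    (htrans : ∀ g : G, ∃! b : G, b ∈ B ∧ b⁻¹ * g ∈ H)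
    (dot : G → G → G)
    (hdotB : ∀ x ∈ B, ∀ y ∈ B, dot x y ∈ B)
    (hdotH : ∀ x ∈ B, ∀ y ∈ B, (dot x y)⁻¹ * (x * y) ∈ H) :
    ((∀ x ∈ B, ∀ y ∈ B, ∃ b ∈ B, ∃ n ∈ H.normalCore, x * y * x = b * n) ↔
      (∀ x ∈ B, ∀ y ∈ B, ∃ b ∈ B,
        (x : G ⧸ H.normalCore) * (y : G ⧸ H.normalCore) * (x : G ⧸ H.normalCore)
          = (b : G ⧸ H.normalCore))) ∧
    ((∀ x ∈ B, ∀ y ∈ B, ∃ b ∈ B,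
        (x : G ⧸ H.normalCore) * (y : G ⧸ H.normalCore) * (x : G ⧸ H.normalCore)
          = (b : G ⧸ H.normalCore)) ↔
      (∀ x ∈ B, ∀ y ∈ B, ∀ z ∈ B,
        dot x (dot y (dot x z)) = dot (dot x (dot y x)) z)) := by
  set N := H.normalCore with hNdef
  have hNH : ∀ n ∈ N, n ∈ H := fun n hn => H.normalCore_le hn
  -- uniqueness of the transversal representative
  have uniqB : ∀ (g b b' : G), b ∈ B → b⁻¹ * g ∈ H → b' ∈ B → b'⁻¹ * g ∈ H → b = b' := by
    intro g b b' hb hbg hb' hb'g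
    obtain ⟨c, -, hcu⟩ := htrans g
    rw [hcu b ⟨hb, hbg⟩, hcu b' ⟨hb', hb'g⟩]
  -- chain lemma: left side of Bol identity represents x*y*x*z
  have chainL : ∀ x ∈ B, ∀ y ∈ B, ∀ z ∈ B,
      (dot x (dot y (dot x z)))⁻¹ * (x * y * x * z) ∈ H := by
    intro x hx y hy z hz
    have h1 := hdotH x hx z hz
    have h2 := hdotH y hy _ (hdotB x hx z hz)
    have h3 := hdotH x hx _ (hdotB y hy _ (hdotB x hx z hz))
    have key := H.mul_mem (H.mul_mem h3 h2) h1
    convert key using 1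
    group
  -- chain lemma: dot x (dot y x) represents x*y*x
  have chainR : ∀ x ∈ B, ∀ y ∈ B, (dot x (dot y x))⁻¹ * (x * y * x) ∈ H := by
    intro x hx y hy
    have h1 := hdotH y hy x hx
    have h2 := hdotH x hx _ (hdotB y hy x hx)
    have key := H.mul_mem h2 h1
    convert key using 1
    group
  -- (i) ↔ (iii)
  have h13 : (∀ x ∈ B, ∀ y ∈ B, ∃ b ∈ B, ∃ n ∈ N, x * y * x = b * n) ↔
      (∀ x ∈ B, ∀ y ∈ B, ∀ z ∈ B,
        dot x (dot y (dot x z)) = dot (dot x (dot y x)) z) := by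
    constructor
    · intro hi x hx y hy z hz
      obtain ⟨b, hb, n, hn, heq⟩ := hi x hx y hy
      have hqB : dot x (dot y x) ∈ B := hdotB x hx _ (hdotB y hy x hx)
      have hbH : b⁻¹ * (x * y * x) ∈ H := by
        rw [heq]
        have : b⁻¹ * (b * n) = n := by group
        rw [this]; exact hNH n hn
      have hqb : dot x (dot y x) = b :=
        uniqB (x * y * x) _ _ hqB (chainR x hx y hy) hb hbH
      have huB : dot x (dot y (dot x z)) ∈ B :=
        hdotB x hx _ (hdotB y hy _ (hdotB x hx z hz))
      have hu := chainL x hx y hy z hz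
      -- z⁻¹ * n * z ∈ N ⊆ H
      have hnz : z⁻¹ * n * z ∈ H := by
        apply hNH
        have := (Subgroup.normalCore_normal H).conj_mem n hn z⁻¹
        simpa using this
      have hubz : (dot x (dot y (dot x z)))⁻¹ * (b * z) ∈ H := by
        have hu' : (dot x (dot y (dot x z)))⁻¹ * (b * n * z) ∈ H := by
          rw [← heq]; exact hu
        have key := H.mul_mem hu' (H.inv_mem hnz)
        convert key using 1
        group
      have hrbz : (dot (dot x (dot y x)) z)⁻¹ * (b * z) ∈ H := by
        rw [hqb]; exact hdotH b hb z hz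
      exact uniqB (b * z) _ _ huB hubz (hdotB _ hqB z hz) hrbz
    · intro hiii x hx y hy
      have hqB : dot x (dot y x) ∈ B := hdotB x hx _ (hdotB y hy x hx)
      refine ⟨dot x (dot y x), hqB, (dot x (dot y x))⁻¹ * (x * y * x), ?_, by group⟩
      rw [hNdef]
      show ∀ g : G, g * ((dot x (dot y x))⁻¹ * (x * y * x)) * g⁻¹ ∈ H
      -- first: conjugation by elements of B stays in H
      have hBconj : ∀ z ∈ B, z⁻¹ * ((dot x (dot y x))⁻¹ * (x * y * x)) * z ∈ H := by
        intro z hz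
        have hu := chainL x hx y hy z hz
        have hrq : (dot (dot x (dot y x)) z)⁻¹ * (dot x (dot y x) * z) ∈ H :=
          hdotH _ hqB z hz
        have huq : (dot x (dot y (dot x z)))⁻¹ * (dot x (dot y x) * z) ∈ H := by
          rw [hiii x hx y hy z hz]; exact hrq
        have key := H.mul_mem (H.inv_mem huq) hu
        convert key using 1
        group
      intro g
      obtain ⟨z, ⟨hz, hzg⟩, -⟩ := htrans g⁻¹
      -- g⁻¹ = z * k with k = z⁻¹ * g⁻¹ ∈ H
      have key := H.mul_mem (H.mul_mem (H.inv_mem hzg) (hBconj z hz)) hzg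
      convert key using 1
      group
  -- (i) ↔ (ii)
  have h12 : (∀ x ∈ B, ∀ y ∈ B, ∃ b ∈ B, ∃ n ∈ N, x * y * x = b * n) ↔
      (∀ x ∈ B, ∀ y ∈ B, ∃ b ∈ B,
        (x : G ⧸ N) * (y : G ⧸ N) * (x : G ⧸ N) = (b : G ⧸ N)) := by
    constructor
    · intro hi x hx y hy
      obtain ⟨b, hb, n, hn, heq⟩ := hi x hx y hy
      refine ⟨b, hb, ?_⟩
      have : ((x : G ⧸ N) * y * x) = ((x * y * x : G) : G ⧸ N) := by
        rw [QuotientGroup.mk_mul, QuotientGroup.mk_mul]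
      rw [this, heq, QuotientGroup.mk_mul,
        (QuotientGroup.eq_one_iff n).mpr hn, mul_one]
    · intro hii x hx y hy
      obtain ⟨b, hb, heq⟩ := hii x hx y hy
      have : ((x * y * x : G) : G ⧸ N) = ((b : G) : G ⧸ N) := by
        rw [QuotientGroup.mk_mul, QuotientGroup.mk_mul]; exact heq
      have hmem : (x * y * x)⁻¹ * b ∈ N := QuotientGroup.eq.mp this
      refine ⟨b, hb, b⁻¹ * (x * y * x), ?_, by group⟩
      have := N.inv_mem hmem
      simpa [mul_assoc] using this
  exact ⟨h12, h12.symm.trans h13⟩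
end

section
/- Let G be a group, H a subgroup of G, and B ⊆ G a unital left transversal of H, with induced operation · on B, and let N = core_G(H) be the normal core of H in G. Then the following are equivalent: (i) xy²x ∈ (x·y)²N for all x,y ∈ B; (ii) in the quotient group G/N, (xN)(yN)²(xN) = ((x·y)N)² for all x,y ∈ B; (iii) (B,·) satisfies the identity L_x ∘ L_y ∘ L_y ∘ L_x = L_{x·y} ∘ L_{x·y} for all x,y ∈ B. -/
/-- Let `G` be a group, `H` a subgroup and `B ⊆ G` a unital
left transversal of `H`, with induced operation `dot` on `B`, and let
`N = core_G(H)` be the normal core of `H` in `G`.  Then the following are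
equivalent: (i) `x y² x ∈ (x·y)² N` for all `x, y ∈ B`; (ii) in the quotient
group `G/N`, `(xN)(yN)²(xN) = ((x·y)N)²` for all `x, y ∈ B`; (iii) `(B, dot)`
satisfies `L x ∘ L y ∘ L y ∘ L x = L (x·y) ∘ L (x·y)` pointwise on `B`. -/
theorem statement16 {G : Type*} [Group G] (H : Subgroup G) (B : Set G)
    (h1B : (1 : G) ∈ B)
    (htrans : ∀ g : G, ∃! b : G, b ∈ B ∧ b⁻¹ * g ∈ H)
    (dot : G → G → G)
    (hdotB : ∀ x ∈ B, ∀ y ∈ B, dot x y ∈ B)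
    (hdotH : ∀ x ∈ B, ∀ y ∈ B, (dot x y)⁻¹ * (x * y) ∈ H) :
    ((∀ x ∈ B, ∀ y ∈ B, ∃ n ∈ H.normalCore, x * (y * y) * x = (dot x y * dot x y) * n) ↔
      (∀ x ∈ B, ∀ y ∈ B,
        (x : G ⧸ H.normalCore) * ((y : G ⧸ H.normalCore) * (y : G ⧸ H.normalCore))
            * (x : G ⧸ H.normalCore)
          = (dot x y : G ⧸ H.normalCore) * (dot x y : G ⧸ H.normalCore))) ∧
    ((∀ x ∈ B, ∀ y ∈ B,
        (x : G ⧸ H.normalCore) * ((y : G ⧸ H.normalCore) * (y : G ⧸ H.normalCore))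
            * (x : G ⧸ H.normalCore)
          = (dot x y : G ⧸ H.normalCore) * (dot x y : G ⧸ H.normalCore)) ↔
      (∀ x ∈ B, ∀ y ∈ B, ∀ z ∈ B,
        dot x (dot y (dot y (dot x z))) = dot (dot x y) (dot (dot x y) z))) := by
  -- uniqueness of the transversal representative
  have huniq : ∀ g : G, ∀ a ∈ B, ∀ b ∈ B, a⁻¹ * g ∈ H → b⁻¹ * g ∈ H → a = b := by
    intro g a ha b hb h1 h2
    obtain ⟨c, _, hu⟩ := htrans g
    rw [hu a ⟨ha, h1⟩, hu b ⟨hb, h2⟩]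
  -- one step: if q⁻¹ t ∈ H then (dot p q)⁻¹ (p t) ∈ H
  have step : ∀ p ∈ B, ∀ q ∈ B, ∀ t : G, q⁻¹ * t ∈ H → (dot p q)⁻¹ * (p * t) ∈ H := by
    intro p hp q hq t ht
    have := H.mul_mem (hdotH p hp q hq) ht
    have e : (dot p q)⁻¹ * (p * q) * (q⁻¹ * t) = (dot p q)⁻¹ * (p * t) := by group
    rwa [e] at this
  -- the two iterated translations
  have hA : ∀ x ∈ B, ∀ y ∈ B, ∀ z ∈ B,
      (dot x (dot y (dot y (dot x z))))⁻¹ * (x * (y * (y * (x * z)))) ∈ H := by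
    intro x hx y hy z hz
    exact step x hx _ (hdotB y hy _ (hdotB y hy _ (hdotB x hx z hz))) _
      (step y hy _ (hdotB y hy _ (hdotB x hx z hz)) _
        (step y hy _ (hdotB x hx z hz) _
          (step x hx z hz z (by simpa using H.one_mem))))
  have hBv : ∀ x ∈ B, ∀ y ∈ B, ∀ z ∈ B,
      (dot (dot x y) (dot (dot x y) z))⁻¹ * (dot x y * (dot x y * z)) ∈ H := by
    intro x hx y hy z hz
    have hxy := hdotB x hx y hy
    exact step _ hxy _ (hdotB _ hxy z hz) _
      (step _ hxy z hz z (by simpa using H.one_mem))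
  -- (ii) as a membership statement
  have hquot : ∀ x y : G,
      ((x : G ⧸ H.normalCore) * ((y : G ⧸ H.normalCore) * (y : G ⧸ H.normalCore))
          * (x : G ⧸ H.normalCore)
        = (dot x y : G ⧸ H.normalCore) * (dot x y : G ⧸ H.normalCore))
      ↔ (x * (y * y) * x)⁻¹ * (dot x y * dot x y) ∈ H.normalCore := by
    intro x y
    rw [← QuotientGroup.mk_mul, ← QuotientGroup.mk_mul, ← QuotientGroup.mk_mul,
      ← QuotientGroup.mk_mul, QuotientGroup.eq]
  constructor
  · -- (i) ↔ (ii)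
    constructor
    · intro h x hx y hy
      obtain ⟨n, hn, he⟩ := h x hx y hy
      rw [hquot]
      have : (x * (y * y) * x)⁻¹ * (dot x y * dot x y) = n⁻¹ := by
        rw [he]; group
      rw [this]
      exact H.normalCore.inv_mem hn
    · intro h x hx y hy
      have := (hquot x y).mp (h x hx y hy)
      refine ⟨((x * (y * y) * x)⁻¹ * (dot x y * dot x y))⁻¹,
        H.normalCore.inv_mem this, ?_⟩
      group
      simp [pow_two, zpow_two, mul_assoc]
  · -- (ii) ↔ (iii)
    constructor
    · intro h x hx y hy z hz
      have hm := (hquot x y).mp (h x hx y hy)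
      -- apply uniqueness at g = dot x y * (dot x y * z)
      refine huniq (dot x y * (dot x y * z)) _
        (hdotB x hx _ (hdotB y hy _ (hdotB y hy _ (hdotB x hx z hz)))) _
        (hdotB _ (hdotB x hx y hy) _ (hdotB _ (hdotB x hx y hy) z hz)) ?_
        (hBv x hx y hy z hz)
      -- (A)⁻¹ * (d*(d*z)) ∈ H
      have h1 := hA x hx y hy z hz
      have h2 : (x * (y * (y * (x * z))))⁻¹ * (dot x y * (dot x y * z)) ∈ H := by
        have hc := Subgroup.Normal.conj_mem (Subgroup.normalCore_normal H) _ hm z⁻¹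
        have hc' := Subgroup.normalCore_le H hc
        have e : z⁻¹ * ((x * (y * y) * x)⁻¹ * (dot x y * dot x y)) * z⁻¹⁻¹
            = (x * (y * (y * (x * z))))⁻¹ * (dot x y * (dot x y * z)) := by group
        rwa [e] at hc'
      have := H.mul_mem h1 h2
      have e : (dot x (dot y (dot y (dot x z))))⁻¹ * (x * (y * (y * (x * z))))
          * ((x * (y * (y * (x * z))))⁻¹ * (dot x y * (dot x y * z)))
          = (dot x (dot y (dot y (dot x z))))⁻¹ * (dot x y * (dot x y * z)) := by group
      rwa [e] at this
    · intro h x hx y hy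
      rw [hquot]
      -- show w := (x(yy)x)⁻¹ (d d) ∈ normalCore
      have key : ∀ z ∈ B, z⁻¹ * ((x * (y * y) * x)⁻¹ * (dot x y * dot x y)) * z ∈ H := by
        intro z hz
        have h1 := hA x hx y hy z hz
        have h2 := hBv x hx y hy z hz
        rw [h x hx y hy z hz] at h1
        have := H.mul_mem (H.inv_mem h1) h2
        have e : ((dot (dot x y) (dot (dot x y) z))⁻¹ * (x * (y * (y * (x * z)))))⁻¹
            * ((dot (dot x y) (dot (dot x y) z))⁻¹ * (dot x y * (dot x y * z)))
            = z⁻¹ * ((x * (y * y) * x)⁻¹ * (dot x y * dot x y)) * z := by group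
        rwa [e] at this
      intro b
      obtain ⟨z, ⟨hzB, hzH⟩, _⟩ := htrans b⁻¹
      have hz := key z hzB
      -- b⁻¹ = z * (z⁻¹ * b⁻¹), with h := z⁻¹ b⁻¹ ∈ H
      set w := (x * (y * y) * x)⁻¹ * (dot x y * dot x y) with hw
      have := H.mul_mem (H.mul_mem (H.inv_mem hzH) hz) hzH
      have e : (z⁻¹ * b⁻¹)⁻¹ * (z⁻¹ * w * z) * (z⁻¹ * b⁻¹) = b * w * b⁻¹ := by group
      rwa [e] at this
end

section
/- Let G be a group, H a subgroup of G, and B ⊆ G a unital left transversal of H, with induced operation · on B, action σ and mapping m, and let N = core_G(H) and BN = {bn : b ∈ B, n ∈ N}. For each h ∈ H the following are equivalent: (i) σ_h is an automorphism of (B,·), i.e. σ_h(x·y) = σ_h(x)·σ_h(y) for all x,y ∈ B; (ii) hBh⁻¹ ⊆ BN; (iii) m(x,h) ∈ N for all x ∈ B. -/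
theorem statement17_mem_normalCore {G : Type*} [Group G] {H : Subgroup G} {a : G}
    (h : ∀ b : G, b * a * b⁻¹ ∈ H) : a ∈ H.normalCore := h

theorem statement17_normalCore_mem {G : Type*} [Group G] {H : Subgroup G} {a : G}
    (h : a ∈ H.normalCore) : ∀ b : G, b * a * b⁻¹ ∈ H := h

/-- Let `G` be a group, `H` a subgroup and `B ⊆ G` a unital
left transversal of `H`, with induced operation `dot`, action `σ`, and mapping
`m(x,h) = (σ h x)⁻¹ h x h⁻¹`, and let `N = core_G(H)` be the normal core of `H`
in `G` and `BN = {bn : b ∈ B, n ∈ N}`.  For each `h ∈ H` the following are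
equivalent: (i) `σ h` is an automorphism of `(B, dot)`; (ii) `hBh⁻¹ ⊆ BN`;
(iii) `m(x,h) ∈ N` for all `x ∈ B`. -/
theorem statement17 {G : Type*} [Group G] (H : Subgroup G) (B : Set G)
    (h1B : (1 : G) ∈ B)
    (htrans : ∀ g : G, ∃! b : G, b ∈ B ∧ b⁻¹ * g ∈ H)
    (dot : G → G → G)
    (hdotB : ∀ x ∈ B, ∀ y ∈ B, dot x y ∈ B)
    (hdotH : ∀ x ∈ B, ∀ y ∈ B, (dot x y)⁻¹ * (x * y) ∈ H)
    (σ : G → G → G)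
    (hσB : ∀ g : G, ∀ x ∈ B, σ g x ∈ B)
    (hσH : ∀ g : G, ∀ x ∈ B, (σ g x)⁻¹ * (g * x) ∈ H) :
    ∀ h ∈ H,
      ((∀ x ∈ B, ∀ y ∈ B, σ h (dot x y) = dot (σ h x) (σ h y)) ↔
        (∀ x ∈ B, ∃ b ∈ B, ∃ n ∈ H.normalCore, h * x * h⁻¹ = b * n)) ∧
      ((∀ x ∈ B, ∃ b ∈ B, ∃ n ∈ H.normalCore, h * x * h⁻¹ = b * n) ↔
        (∀ x ∈ B, (σ h x)⁻¹ * h * x * h⁻¹ ∈ H.normalCore)) := by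
  -- uniqueness of representatives
  have uniq : ∀ g : G, ∀ b₁ ∈ B, ∀ b₂ ∈ B, b₁⁻¹ * g ∈ H → b₂⁻¹ * g ∈ H → b₁ = b₂ := by
    intro g b₁ hb₁ b₂ hb₂ m₁ m₂
    obtain ⟨b, -, hu⟩ := htrans g
    rw [hu b₁ ⟨hb₁, m₁⟩, hu b₂ ⟨hb₂, m₂⟩]
  intro h hh
  -- (ii) ↔ (iii)
  have e23 : (∀ x ∈ B, ∃ b ∈ B, ∃ n ∈ H.normalCore, h * x * h⁻¹ = b * n) ↔
      (∀ x ∈ B, (σ h x)⁻¹ * h * x * h⁻¹ ∈ H.normalCore) := by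
    constructor
    · intro hii x hx
      obtain ⟨b, hb, n, hn, heq⟩ := hii x hx
      have hbσ : b = σ h x := by
        refine uniq (h * x) b hb (σ h x) (hσB h x hx) ?_ (hσH h x hx)
        have hx' : h * x = b * n * h := by
          have : h * x * h⁻¹ * h = b * n * h := by rw [heq]
          simpa using this
        have : b⁻¹ * (h * x) = n * h := by rw [hx']; group
        rw [this]
        exact H.mul_mem (H.normalCore_le hn) hh
      have : (σ h x)⁻¹ * h * x * h⁻¹ = n := by
        rw [← hbσ]
        have : b⁻¹ * (h * x * h⁻¹) = n := by rw [heq]; group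
        rw [← this]; group
      rw [this]; exact hn
    · intro hiii x hx
      refine ⟨σ h x, hσB h x hx, (σ h x)⁻¹ * h * x * h⁻¹, hiii x hx, ?_⟩
      group
  refine ⟨?_, e23⟩
  rw [e23]
  -- now prove (i) ↔ (iii)
  -- key identity: (σ h x * σ h y)⁻¹ * (h * x * y)
  --   = m_y * h * (y⁻¹ * (h⁻¹ * m_x * h) * y)   where m_z = (σ h z)⁻¹ * h * z * h⁻¹
  have key : ∀ x y : G,
      (σ h x * σ h y)⁻¹ * (h * (x * y)) =
        ((σ h y)⁻¹ * h * y * h⁻¹) * h *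
          (y⁻¹ * (h⁻¹ * ((σ h x)⁻¹ * h * x * h⁻¹) * h) * y) := by
    intro x y; group
  constructor
  · -- (i) → (iii)
    intro hi x hx
    set mx := (σ h x)⁻¹ * h * x * h⁻¹ with hmx
    have hmxH : mx ∈ H := by
      have h1 : (σ h x)⁻¹ * (h * x) ∈ H := hσH h x hx
      have : mx = ((σ h x)⁻¹ * (h * x)) * h⁻¹ := by rw [hmx]; group
      rw [this]; exact H.mul_mem h1 (H.inv_mem hh)
    -- step: for all y ∈ B, (h*y)⁻¹ * mx * (h*y) ∈ H
    have step : ∀ y ∈ B, y⁻¹ * (h⁻¹ * mx * h) * y ∈ H := by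
      intro y hy
      have hxy := hdotB x hx y hy
      have heq := hi x hx y hy
      -- lhs⁻¹ * (h * (x*y)) ∈ H
      have l1 : (σ h (dot x y))⁻¹ * (h * (x * y)) ∈ H := by
        have a1 : (σ h (dot x y))⁻¹ * (h * dot x y) ∈ H := hσH h _ hxy
        have a2 : (dot x y)⁻¹ * (x * y) ∈ H := hdotH x hx y hy
        have : (σ h (dot x y))⁻¹ * (h * (x * y)) =
            ((σ h (dot x y))⁻¹ * (h * dot x y)) * ((dot x y)⁻¹ * (x * y)) := by group
        rw [this]; exact H.mul_mem a1 a2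
      -- so rhs variant too
      have l2 : (dot (σ h x) (σ h y))⁻¹ * (h * (x * y)) ∈ H := heq ▸ l1
      have l3 : (dot (σ h x) (σ h y))⁻¹ * (σ h x * σ h y) ∈ H :=
        hdotH _ (hσB h x hx) _ (hσB h y hy)
      have l4 : (σ h x * σ h y)⁻¹ * (h * (x * y)) ∈ H := by
        have : (σ h x * σ h y)⁻¹ * (h * (x * y)) =
            ((dot (σ h x) (σ h y))⁻¹ * (σ h x * σ h y))⁻¹ *
              ((dot (σ h x) (σ h y))⁻¹ * (h * (x * y))) := by group
        rw [this]; exact H.mul_mem (H.inv_mem l3) l2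
      have l5 := key x y
      rw [hmx]
      have hmyH : ((σ h y)⁻¹ * h * y * h⁻¹) * h ∈ H := by
        have : ((σ h y)⁻¹ * h * y * h⁻¹) * h = (σ h y)⁻¹ * (h * y) := by group
        rw [this]; exact hσH h y hy
      have : y⁻¹ * (h⁻¹ * ((σ h x)⁻¹ * h * x * h⁻¹) * h) * y =
          (((σ h y)⁻¹ * h * y * h⁻¹) * h)⁻¹ * ((σ h x * σ h y)⁻¹ * (h * (x * y))) := by
        rw [l5]; group
      rw [this]
      exact H.mul_mem (H.inv_mem hmyH) l4
    -- conclude mx ∈ normalCore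
    refine statement17_mem_normalCore ?_
    intro g
    -- write h⁻¹ * g⁻¹ = y * k
    obtain ⟨y, ⟨hy, hk⟩, -⟩ := htrans (h⁻¹ * g⁻¹)
    -- g * mx * g⁻¹ ∈ H: note g⁻¹ = h * y * k where k = y⁻¹ * (h⁻¹ * g⁻¹)
    have hgk : g⁻¹ = h * (y * (y⁻¹ * (h⁻¹ * g⁻¹))) := by group
    have : g * mx * g⁻¹ =
        (y⁻¹ * (h⁻¹ * g⁻¹))⁻¹ * (y⁻¹ * (h⁻¹ * mx * h) * y) * (y⁻¹ * (h⁻¹ * g⁻¹)) := by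
      group
    rw [this]
    exact H.mul_mem (H.mul_mem (H.inv_mem hk) (step y hy)) hk
  · -- (iii) → (i)
    intro hiii x hx y hy
    have hmx := hiii x hx
    have hmy := hiii y hy
    refine uniq (h * (x * y)) _ (hσB h _ (hdotB x hx y hy)) _
      (hdotB _ (hσB h x hx) _ (hσB h y hy)) ?_ ?_
    · have a1 : (σ h (dot x y))⁻¹ * (h * dot x y) ∈ H := hσH h _ (hdotB x hx y hy)
      have a2 : (dot x y)⁻¹ * (x * y) ∈ H := hdotH x hx y hy
      have : (σ h (dot x y))⁻¹ * (h * (x * y)) =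
          ((σ h (dot x y))⁻¹ * (h * dot x y)) * ((dot x y)⁻¹ * (x * y)) := by group
      rw [this]; exact H.mul_mem a1 a2
    · have l3 : (dot (σ h x) (σ h y))⁻¹ * (σ h x * σ h y) ∈ H :=
        hdotH _ (hσB h x hx) _ (hσB h y hy)
      have l4 : (σ h x * σ h y)⁻¹ * (h * (x * y)) ∈ H := by
        rw [key x y]
        have hmyH : ((σ h y)⁻¹ * h * y * h⁻¹) * h ∈ H := by
          have : ((σ h y)⁻¹ * h * y * h⁻¹) * h = (σ h y)⁻¹ * (h * y) := by group
          rw [this]; exact hσH h y hy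
        refine H.mul_mem hmyH ?_
        have hconj : h⁻¹ * ((σ h x)⁻¹ * h * x * h⁻¹) * h ∈ H.normalCore := by
          have := (H.normalCore_normal).conj_mem _ hmx h⁻¹
          simpa using this
        have : y⁻¹ * (h⁻¹ * ((σ h x)⁻¹ * h * x * h⁻¹) * h) * y ∈ H.normalCore := by
          have := (H.normalCore_normal).conj_mem _ hconj y⁻¹
          simpa using this
        exact H.normalCore_le this
      have : (dot (σ h x) (σ h y))⁻¹ * (h * (x * y)) =
          ((dot (σ h x) (σ h y))⁻¹ * (σ h x * σ h y)) * ((σ h x * σ h y)⁻¹ * (h * (x * y))) := by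
        group
      rw [this]; exact H.mul_mem l3 l4
end

section
/- Let G be a group, H a subgroup of G, and B ⊆ G a unital left transversal of H, with induced operation · on B, and let τ : G → G be defined by τ(ah) = a⁻¹h for a ∈ B, h ∈ H. Then: (1) τ is injective if and only if the right inversion map ρ : B → B, ρ(x) = x^ρ, is injective; (2) τ is surjective if and only if ρ is surjective, i.e. if and only if every element of (B,·) has a left inverse. -/
/-- Let `G` be a group, `H` a subgroup and `B ⊆ G` a unital
left transversal of `H`, with induced operation `dot` on `B`.  Let
`τ : G → G` be defined on the unique factorization by `τ (a*h) = a⁻¹*h`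
(`a ∈ B`, `h ∈ H`), and let `rho : B → B` be right inversion, `rho x = x^ρ`,
the unique element of `B` with `dot x (rho x) = 1`.  Then:
(1) `τ` is injective iff `rho` is injective on `B`;
(2) `τ` is surjective iff `rho` maps `B` onto `B`, i.e. iff every element of
`(B, dot)` has a left inverse. -/
theorem statement18 {G : Type*} [Group G] (H : Subgroup G) (B : Set G)
    (h1B : (1 : G) ∈ B)
    (htrans : ∀ g : G, ∃! b : G, b ∈ B ∧ b⁻¹ * g ∈ H)
    (dot : G → G → G)
    (hdotB : ∀ x ∈ B, ∀ y ∈ B, dot x y ∈ B)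
    (hdotH : ∀ x ∈ B, ∀ y ∈ B, (dot x y)⁻¹ * (x * y) ∈ H)
    (τ : G → G)
    (hτ : ∀ a ∈ B, ∀ h ∈ H, τ (a * h) = a⁻¹ * h)
    (rho : G → G)
    (hrhoB : ∀ x ∈ B, rho x ∈ B)
    (hrho : ∀ x ∈ B, dot x (rho x) = 1) :
    (Function.Injective τ ↔ Set.InjOn rho B) ∧
    (Function.Surjective τ ↔ Set.SurjOn rho B B) := by
  -- uniqueness of factorization
  have uniq : ∀ b₁ ∈ B, ∀ b₂ ∈ B, ∀ h₁ ∈ H, ∀ h₂ ∈ H,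
      b₁ * h₁ = b₂ * h₂ → b₁ = b₂ ∧ h₁ = h₂ := by
    intro b₁ hb₁ b₂ hb₂ h₁ hh₁ h₂ hh₂ heq
    obtain ⟨b, hb, hu⟩ := htrans (b₁ * h₁)
    have e1 : b₁ = b := hu b₁ ⟨hb₁, by simpa using hh₁⟩
    have e2 : b₂ = b := hu b₂ ⟨hb₂, by rw [heq]; simpa using hh₂⟩
    have hbb : b₁ = b₂ := e1.trans e2.symm
    subst hbb
    exact ⟨rfl, mul_left_cancel heq⟩
  -- decomposition
  have decomp : ∀ g : G, ∃ b ∈ B, ∃ h ∈ H, g = b * h := by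
    intro g
    obtain ⟨b, ⟨hbB, hbH⟩, _⟩ := htrans g
    exact ⟨b, hbB, b⁻¹ * g, hbH, by group⟩
  -- x * rho x ∈ H
  have hxrho : ∀ x ∈ B, x * rho x ∈ H := by
    intro x hx
    have := hdotH x hx (rho x) (hrhoB x hx)
    rw [hrho x hx] at this
    simpa using this
  -- kappa
  have hκ : ∀ x ∈ B, (rho x)⁻¹ * x⁻¹ ∈ H := by
    intro x hx
    have := H.inv_mem (hxrho x hx)
    simpa [mul_inv_rev] using this
  -- τ formula on factorization
  have hτ' : ∀ b ∈ B, ∀ h ∈ H, τ (b * h) = rho b * ((rho b)⁻¹ * b⁻¹ * h) := by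
    intro b hb h hh
    rw [hτ b hb h hh]; group
  constructor
  · constructor
    · intro hinj x hx y hy hxy
      have hx' : τ (x * ((rho x)⁻¹ * x⁻¹)⁻¹) = rho x := by
        rw [hτ x hx _ (H.inv_mem (hκ x hx))]; group
      have hy' : τ (y * ((rho y)⁻¹ * y⁻¹)⁻¹) = rho y := by
        rw [hτ y hy _ (H.inv_mem (hκ y hy))]; group
      have := hinj (hx'.trans (hxy.trans hy'.symm))
      exact (uniq x hx y hy _ (H.inv_mem (hκ x hx)) _ (H.inv_mem (hκ y hy)) this).1
    · intro hinj g₁ g₂ heq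
      obtain ⟨a, haB, h, hhH, rfl⟩ := decomp g₁
      obtain ⟨b, hbB, k, hkH, rfl⟩ := decomp g₂
      rw [hτ' a haB h hhH, hτ' b hbB k hkH] at heq
      have h1 : (rho a)⁻¹ * a⁻¹ * h ∈ H := H.mul_mem (hκ a haB) hhH
      have h2 : (rho b)⁻¹ * b⁻¹ * k ∈ H := H.mul_mem (hκ b hbB) hkH
      obtain ⟨hr, hs⟩ := uniq (rho a) (hrhoB a haB) (rho b) (hrhoB b hbB) _ h1 _ h2 heq
      have hab : a = b := hinj haB hbB hr
      subst hab
      rw [mul_left_cancel hs]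
  · constructor
    · intro hsurj b hb
      obtain ⟨g, hg⟩ := hsurj b
      obtain ⟨a, haB, h, hhH, rfl⟩ := decomp g
      rw [hτ' a haB h hhH] at hg
      have h1 : (rho a)⁻¹ * a⁻¹ * h ∈ H := H.mul_mem (hκ a haB) hhH
      have hg' : rho a * ((rho a)⁻¹ * a⁻¹ * h) = b * 1 := by rw [hg, mul_one]
      have := uniq (rho a) (hrhoB a haB) b hb _ h1 1 H.one_mem hg'
      exact ⟨a, haB, this.1⟩
    · intro hsurj g
      obtain ⟨b, hbB, h, hhH, rfl⟩ := decomp g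
      obtain ⟨a, haB, hab⟩ := hsurj hbB
      refine ⟨a * (((rho a)⁻¹ * a⁻¹)⁻¹ * h), ?_⟩
      rw [hτ a haB _ (H.mul_mem (H.inv_mem (hκ a haB)) hhH), hab]
      group
end

section
/- Let G be a group, H a subgroup of G, and B ⊆ G a unital left transversal of H, with induced operation · on B, and suppose G is generated by B. Let τ : G → G be defined by τ(ah) = a⁻¹h for a ∈ B, h ∈ H. Then τ is an automorphism of the group G if and only if xy²x = (x·y)² for all x,y ∈ B. -/
/-- Let `G` be a group, `H` a subgroup and `B ⊆ G` a unital
left transversal of `H`, with induced operation `dot` on `B`, and suppose `G`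
is generated by `B`.  Let `τ : G → G` be defined on the unique factorization by
`τ (a*h) = a⁻¹*h` (`a ∈ B`, `h ∈ H`).  Then `τ` is an automorphism of the group
`G` (a multiplicative bijection) if and only if `x y² x = (x·y)²` for all
`x, y ∈ B`. -/
theorem statement19 {G : Type*} [Group G] (H : Subgroup G) (B : Set G)
    (h1B : (1 : G) ∈ B)
    (htrans : ∀ g : G, ∃! b : G, b ∈ B ∧ b⁻¹ * g ∈ H)
    (dot : G → G → G)
    (hdotB : ∀ x ∈ B, ∀ y ∈ B, dot x y ∈ B)
    (hdotH : ∀ x ∈ B, ∀ y ∈ B, (dot x y)⁻¹ * (x * y) ∈ H)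
    (hgen : Subgroup.closure B = ⊤)
    (τ : G → G)
    (hτ : ∀ a ∈ B, ∀ h ∈ H, τ (a * h) = a⁻¹ * h) :
    (Function.Bijective τ ∧ ∀ g₁ g₂ : G, τ (g₁ * g₂) = τ g₁ * τ g₂) ↔
      (∀ x ∈ B, ∀ y ∈ B, x * (y * y) * x = dot x y * dot x y) := by
  have hτB : ∀ x ∈ B, τ x = x⁻¹ := by
    intro x hx
    have := hτ x hx 1 H.one_mem
    simpa using this
  have hτ1 : τ 1 = 1 := by simpa using hτB 1 h1B
  constructor
  · rintro ⟨-, hmul⟩ x hx y hy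
    have hxy : τ (x * y) = (dot x y)⁻¹ * ((dot x y)⁻¹ * (x * y)) := by
      have := hτ (dot x y) (hdotB x hx y hy) ((dot x y)⁻¹ * (x * y)) (hdotH x hx y hy)
      rwa [mul_inv_cancel_left] at this
    have h2 : τ (x * y) = x⁻¹ * y⁻¹ := by rw [hmul, hτB x hx, hτB y hy]
    have key : (dot x y)⁻¹ * ((dot x y)⁻¹ * (x * y)) = x⁻¹ * y⁻¹ := hxy ▸ h2
    have h3 : dot x y * (dot x y * (x⁻¹ * y⁻¹)) = x * y := by rw [← key]; group
    calc x * (y * y) * x = (x * y) * (y * x) := by group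
      _ = (dot x y * (dot x y * (x⁻¹ * y⁻¹))) * (y * x) := by rw [h3]
      _ = dot x y * dot x y := by group
  · intro hcond
    -- factorization of an arbitrary element and the value of τ on it
    have hfact : ∀ g : G, ∃ b ∈ B, b⁻¹ * g ∈ H ∧ τ g = b⁻¹ * (b⁻¹ * g) := by
      intro g
      obtain ⟨b, ⟨hbB, hbH⟩, -⟩ := htrans g
      refine ⟨b, hbB, hbH, ?_⟩
      have := hτ b hbB (b⁻¹ * g) hbH
      rwa [mul_inv_cancel_left] at this
    -- key lemma: τ (x * g) = x⁻¹ * τ g for x ∈ B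
    have keyA : ∀ x ∈ B, ∀ g : G, τ (x * g) = x⁻¹ * τ g := by
      intro x hx g
      obtain ⟨b, hbB, hbH, hτg⟩ := hfact g
      have hmemH : (dot x b)⁻¹ * (x * b) * (b⁻¹ * g) ∈ H :=
        H.mul_mem (hdotH x hx b hbB) hbH
      have e1 : τ (dot x b * ((dot x b)⁻¹ * (x * b) * (b⁻¹ * g)))
          = (dot x b)⁻¹ * ((dot x b)⁻¹ * (x * b) * (b⁻¹ * g)) :=
        hτ _ (hdotB x hx b hbB) _ hmemH
      have e2 : dot x b * ((dot x b)⁻¹ * (x * b) * (b⁻¹ * g)) = x * g := by group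
      rw [e2] at e1
      have hc' : (dot x b)⁻¹ * (dot x b)⁻¹ = x⁻¹ * b⁻¹ * b⁻¹ * x⁻¹ := by
        rw [← mul_inv_rev, ← hcond x hx b hbB]; group
      rw [e1, hτg]
      calc (dot x b)⁻¹ * ((dot x b)⁻¹ * (x * b) * (b⁻¹ * g))
          = ((dot x b)⁻¹ * (dot x b)⁻¹) * (x * b) * (b⁻¹ * g) := by group
        _ = (x⁻¹ * b⁻¹ * b⁻¹ * x⁻¹) * (x * b) * (b⁻¹ * g) := by rw [hc']
        _ = x⁻¹ * (b⁻¹ * (b⁻¹ * g)) := by group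
    -- multiplicativity
    have hmul : ∀ g₁ g₂ : G, τ (g₁ * g₂) = τ g₁ * τ g₂ := by
      have main : ∀ g₁ ∈ Subgroup.closure B, ∀ g₂ : G, τ (g₁ * g₂) = τ g₁ * τ g₂ := by
        intro g₁ hg₁
        induction hg₁ using Subgroup.closure_induction with
        | mem x hx => intro g; rw [keyA x hx g, hτB x hx]
        | one => intro g; simp [hτ1]
        | mul a b ha hb iha ihb =>
          intro g
          rw [show a * b * g = a * (b * g) by group, iha, ihb, iha b, mul_assoc]
        | inv a ha iha =>
          have key : ∀ g : G, τ (a⁻¹ * g) = (τ a)⁻¹ * τ g := by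
            intro g
            have h := iha (a⁻¹ * g)
            rw [mul_inv_cancel_left] at h
            exact eq_inv_mul_iff_mul_eq.mpr h.symm
          have hainv : τ a⁻¹ = (τ a)⁻¹ := by simpa [hτ1] using key 1
          intro g; rw [key g, hainv]
      intro g₁ g₂
      exact main g₁ (hgen ▸ Subgroup.mem_top g₁) g₂
    have hinv : ∀ g : G, τ g⁻¹ = (τ g)⁻¹ := by
      intro g
      have h := hmul g⁻¹ g
      rw [inv_mul_cancel, hτ1] at h
      exact eq_inv_of_mul_eq_one_left h.symm
    have hinvol : Function.Involutive τ := by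
      intro g
      have : ∀ g ∈ Subgroup.closure B, τ (τ g) = g := by
        intro g hg
        induction hg using Subgroup.closure_induction with
        | mem x hx => rw [hτB x hx, hinv, hτB x hx, inv_inv]
        | one => rw [hτ1, hτ1]
        | mul a b ha hb iha ihb => rw [hmul, hmul, iha, ihb]
        | inv a ha iha => rw [hinv, hinv, iha]
      exact this g (hgen ▸ Subgroup.mem_top g)
    exact ⟨hinvol.bijective, hmul⟩
end
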